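/- For every even integer n ≥ 6, there exist permutations σ₁, σ₂, σ₃, σ₄ in the symmetric group Sₙ on n letters such that: σ₁, σ₂, σ₃ each have cycle type consisting of (n-2)/2 copies of 2, σ₄ has cycle type consisting of one 4 together with (n-4)/2 copies of 2 (a 4-cycle times (n-4)/2 disjoint transpositions), σ₁σ₂σ₃σ₄ = 1, and the subgroup of Sₙ generated by σ₁, σ₂, σ₃, σ₄ is transitive on the n letters. -/

import Mathlib

open Equiv Equiv.Perm

private lemma invol_cycleType {α : Type*} [DecidableEq α] [Fintype α] {σ : Equiv.Perm α}
    (h : σ * σ = 1) : σ.cycleType = Multiset.replicate (σ.support.card / 2) 2 := by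
  have h2 : ∀ x ∈ σ.cycleType, x = 2 := by
    intro x hx
    have hle := Equiv.Perm.two_le_of_mem_cycleType hx
    have hdvd : x ∣ 2 := by
      have h1 : x ∣ σ.cycleType.lcm := Multiset.dvd_lcm hx
      rw [Equiv.Perm.lcm_cycleType] at h1
      exact h1.trans (orderOf_dvd_of_pow_eq_one (by rw [pow_two]; exact h))
    exact le_antisymm (Nat.le_of_dvd (by norm_num) hdvd) hle
  have hrep := Multiset.eq_replicate_card.mpr h2
  have hsum := Equiv.Perm.sum_cycleType σ
  rw [hrep, Multiset.sum_replicate, smul_eq_mul] at hsum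
  rw [hrep]
  congr 1
  omega

private def g1 (N : ℕ) : Option (ZMod N) → Option (ZMod N) :=
  Option.map (fun j => 1 - j)

private def g2 (N : ℕ) : Option (ZMod N) → Option (ZMod N) :=
  Option.map (fun j => -j)

private def g3 (N : ℕ) (k : ZMod N) : Option (ZMod N) → Option (ZMod N)
  | none => some k
  | some j => if j = k then none else if j = k + 1 then some (k + 1) else some (-j)

private def gw (N : ℕ) (k : ZMod N) : Option (ZMod N) → Option (ZMod N)
  | none => none
  | some j => if j = k ∨ j = k + 1 ∨ j = k + 2 then some j else some (1 - j)

/-- Type I degeneration 3 for even `n ≥ 6`: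
cycle types `(2^((n-2)/2), 2^((n-2)/2), 2^((n-2)/2), (4)(2)^((n-4)/2))`,
product one, generating a transitive subgroup of `Sₙ`. -/
theorem stmt_13 (n : ℕ) (hn : Even n) (hn6 : 6 ≤ n) :
    ∃ σ₁ σ₂ σ₃ σ₄ : Equiv.Perm (Fin n),
      σ₁.cycleType = Multiset.replicate ((n - 2) / 2) 2 ∧
      σ₂.cycleType = Multiset.replicate ((n - 2) / 2) 2 ∧
      σ₃.cycleType = Multiset.replicate ((n - 2) / 2) 2 ∧
      σ₄.cycleType = 4 ::ₘ Multiset.replicate ((n - 4) / 2) 2 ∧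
      σ₁ * σ₂ * σ₃ * σ₄ = 1 ∧
      ∀ a b : Fin n,
        ∃ g ∈ Subgroup.closure ({σ₁, σ₂, σ₃, σ₄} : Set (Equiv.Perm (Fin n))), g a = b := by
  classical
  obtain ⟨m, hm⟩ := hn
  set N : ℕ := n - 1 with hNdef
  have hN5 : 5 ≤ N := by omega
  have hNn : N + 1 = n := by omega
  haveI : NeZero N := ⟨by omega⟩
  haveI : Fact (1 < N) := ⟨by omega⟩
  -- the distinguished element k
  set kn : ℕ := (N - 1) / 2 with hkndef
  have hkn2 : 2 ≤ kn := by omega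
  have hknmul : 2 * kn = N - 1 := by omega
  have hknN : kn + 2 < N := by omega
  set k : ZMod N := (kn : ZMod N) with hkdef
  -- basic cast facts
  have castinj : ∀ a b : ℕ, a < N → b < N → ((a : ZMod N) = (b : ZMod N)) → a = b := by
    intro a b ha hb h
    rw [← ZMod.val_cast_of_lt ha, ← ZMod.val_cast_of_lt hb, h]
  have ek1 : k + 1 = ((kn + 1 : ℕ) : ZMod N) := by push_cast; ring
  have ek2 : k + 2 = ((kn + 2 : ℕ) : ZMod N) := by push_cast; ring
  have hk : (2 : ZMod N) * k = -1 := by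
    have h1 := congrArg (Nat.cast : ℕ → ZMod N) hknmul
    rw [Nat.cast_mul, Nat.cast_sub (by omega : 1 ≤ N), ZMod.natCast_self, Nat.cast_one,
      zero_sub, Nat.cast_ofNat] at h1
    exact h1
  -- 2 is a unit
  have hNodd : Odd N := Nat.odd_iff.mpr (by omega)
  have htwounit : IsUnit (2 : ZMod N) := by
    have := (ZMod.isUnit_iff_coprime 2 N).mpr (Nat.coprime_two_left.mpr hNodd)
    simpa using this
  have hcancel : ∀ a b : ZMod N, 2 * a = 2 * b → a = b := fun a b h =>
    htwounit.mul_left_cancel h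
  -- handy identities
  have e1 : -k = k + 1 := by linear_combination -hk
  have e2 : -(k + 1) = k := by linear_combination -hk
  have e4 : 1 - k = k + 2 := by linear_combination -hk
  have e5 : 1 - (k + 1) = k + 1 := by linear_combination -hk
  have e6 : 1 - (k + 2) = k := by linear_combination -hk
  have e7 : 2 * (k + 1) = 1 := by linear_combination hk
  -- distinctness
  have hkk1 : k ≠ k + 1 := by
    rw [hkdef, ek1]; intro h
    have := castinj _ _ (by omega) (by omega) h; omega
  have hkk2 : k ≠ k + 2 := by
    rw [hkdef, ek2]; intro h
    have := castinj _ _ (by omega) (by omega) h; omega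
  have hk1k2 : k + 1 ≠ k + 2 := by
    rw [ek1, ek2]; intro h
    have := castinj _ _ (by omega) (by omega) h; omega
  have h0k : (0 : ZMod N) ≠ k := by
    rw [hkdef, show (0 : ZMod N) = ((0 : ℕ) : ZMod N) by simp]; intro h
    have := castinj _ _ (by omega) (by omega) h; omega
  have h0k1 : (0 : ZMod N) ≠ k + 1 := by
    rw [ek1, show (0 : ZMod N) = ((0 : ℕ) : ZMod N) by simp]; intro h
    have := castinj _ _ (by omega) (by omega) h; omega
  have h0k2 : (0 : ZMod N) ≠ k + 2 := by
    rw [ek2, show (0 : ZMod N) = ((0 : ℕ) : ZMod N) by simp]; intro h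
    have := castinj _ _ (by omega) (by omega) h; omega
  -- fixed point characterizations
  have hfix1 : ∀ j : ZMod N, 1 - j = j ↔ j = k + 1 := by
    intro j
    constructor
    · intro h
      apply hcancel
      rw [e7]
      linear_combination -h
    · rintro rfl; exact e5
  have hfix2 : ∀ j : ZMod N, -j = j ↔ j = 0 := by
    intro j
    constructor
    · intro h
      apply hcancel
      rw [mul_zero]
      linear_combination -h
    · rintro rfl; simp
  -- the permutations on Option (ZMod N)
  have hinv1 : Function.Involutive (g1 N) := by
    intro x; cases x <;> simp [g1]
  have hinv2 : Function.Involutive (g2 N) := by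
    intro x; cases x <;> simp [g2]
  have hinv3 : Function.Involutive (g3 N k) := by
    intro x
    match x with
    | none => simp [g3]
    | some j =>
      by_cases h1 : j = k
      · subst h1; simp [g3]
      · by_cases h2 : j = k + 1
        · subst h2; simp [g3, (Ne.symm hkk1)]
        · have hn1 : -j ≠ k := by
            intro h
            apply h2
            have : j = -k := by rw [← h, neg_neg]
            rwa [e1] at this
          have hn2 : -j ≠ k + 1 := by
            intro h
            apply h1
            have : j = -(k + 1) := by rw [← h, neg_neg]
            rwa [e2] at this
          simp [g3, h1, h2, hn1, hn2]
  have hinvw : Function.Involutive (gw N k) := by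
    intro x
    match x with
    | none => simp [gw]
    | some j =>
      by_cases hs : j = k ∨ j = k + 1 ∨ j = k + 2
      · simp [gw, hs]
      · push_neg at hs
        obtain ⟨hs1, hs2, hs3⟩ := hs
        have h1 : 1 - j ≠ k := by
          intro h
          apply hs3
          have : j = 1 - k := by rw [← h]; ring
          rwa [e4] at this
        have h2 : 1 - j ≠ k + 1 := by
          intro h
          apply hs2
          have : j = 1 - (k + 1) := by rw [← h]; ring
          rwa [e5] at this
        have h3 : 1 - j ≠ k + 2 := by
          intro h
          apply hs1
          have : j = 1 - (k + 2) := by rw [← h]; ring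
          rwa [e6] at this
        simp [gw, hs1, hs2, hs3, h1, h2, h3]
  obtain ⟨σ₁, hσ₁⟩ : ∃ σ : Perm (Option (ZMod N)), ⇑σ = g1 N := ⟨hinv1.toPerm _, rfl⟩
  obtain ⟨σ₂, hσ₂⟩ : ∃ σ : Perm (Option (ZMod N)), ⇑σ = g2 N := ⟨hinv2.toPerm _, rfl⟩
  obtain ⟨σ₃, hσ₃⟩ : ∃ σ : Perm (Option (ZMod N)), ⇑σ = g3 N k := ⟨hinv3.toPerm _, rfl⟩
  obtain ⟨w, hw⟩ : ∃ σ : Perm (Option (ZMod N)), ⇑σ = gw N k := ⟨hinvw.toPerm _, rfl⟩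
  -- squares
  have hsq1 : σ₁ * σ₁ = 1 := by
    refine Equiv.ext fun x => ?_
    simp only [Equiv.Perm.mul_apply, Equiv.Perm.one_apply, hσ₁]
    exact hinv1 x
  have hsq2 : σ₂ * σ₂ = 1 := by
    refine Equiv.ext fun x => ?_
    simp only [Equiv.Perm.mul_apply, Equiv.Perm.one_apply, hσ₂]
    exact hinv2 x
  have hsq3 : σ₃ * σ₃ = 1 := by
    refine Equiv.ext fun x => ?_
    simp only [Equiv.Perm.mul_apply, Equiv.Perm.one_apply, hσ₃]
    exact hinv3 x
  have hsqw : w * w = 1 := by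
    refine Equiv.ext fun x => ?_
    simp only [Equiv.Perm.mul_apply, Equiv.Perm.one_apply, hw]
    exact hinvw x
  have hcardO : Fintype.card (Option (ZMod N)) = N + 1 := by
    simp [ZMod.card]
  -- supports
  have hsupp1 : σ₁.support = Finset.univ \ {none, some (k + 1)} := by
    ext x
    rw [Equiv.Perm.mem_support, hσ₁]
    cases x with
    | none => simp [g1]
    | some j => simp [g1, hfix1 j]
  have hsupp2 : σ₂.support = Finset.univ \ {none, some (0 : ZMod N)} := by
    ext x
    rw [Equiv.Perm.mem_support, hσ₂]
    cases x with
    | none => simp [g2]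
    | some j => simp [g2, hfix2 j]
  have hsupp3 : σ₃.support = Finset.univ \ {some (0 : ZMod N), some (k + 1)} := by
    ext x
    rw [Equiv.Perm.mem_support, hσ₃]
    cases x with
    | none => simp [g3]
    | some j =>
      by_cases h1 : j = k
      · subst h1
        simp [g3, Ne.symm h0k, hkk1]
      · by_cases h2 : j = k + 1
        · subst h2
          simp [g3, Ne.symm hkk1]
        · simp [g3, h1, h2, hfix2 j]
  have hsuppw : w.support = Finset.univ \ {none, some k, some (k + 1), some (k + 2)} := by
    ext x
    rw [Equiv.Perm.mem_support, hw]
    cases x with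
    | none => simp [gw]
    | some j =>
      by_cases hs : j = k ∨ j = k + 1 ∨ j = k + 2
      · rcases hs with h | h | h <;> subst h <;> simp [gw, hkk1, hkk2, hk1k2]
      · push_neg at hs
        obtain ⟨hs1, hs2, hs3⟩ := hs
        simp [gw, hs1, hs2, hs3, hfix1 j]
  -- support cardinalities
  have hcard1 : σ₁.support.card = N - 1 := by
    rw [hsupp1, Finset.card_sdiff_of_subset (Finset.subset_univ _), Finset.card_univ, hcardO,
      Finset.card_insert_of_notMem (by simp), Finset.card_singleton]
    omega
  have hcard2 : σ₂.support.card = N - 1 := by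
    rw [hsupp2, Finset.card_sdiff_of_subset (Finset.subset_univ _), Finset.card_univ, hcardO,
      Finset.card_insert_of_notMem (by simp), Finset.card_singleton]
    omega
  have hcard3 : σ₃.support.card = N - 1 := by
    rw [hsupp3, Finset.card_sdiff_of_subset (Finset.subset_univ _), Finset.card_univ, hcardO,
      Finset.card_insert_of_notMem (by simp [h0k1]), Finset.card_singleton]
    omega
  have hcardw : w.support.card = N - 3 := by
    rw [hsuppw, Finset.card_sdiff_of_subset (Finset.subset_univ _), Finset.card_univ, hcardO,
      Finset.card_insert_of_notMem (by simp),
      Finset.card_insert_of_notMem (by simp [hkk1, hkk2]),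
      Finset.card_insert_of_notMem (by simp [hk1k2]), Finset.card_singleton]
    omega
  -- cycle types of the involutions
  have hct1 : σ₁.cycleType = Multiset.replicate ((n - 2) / 2) 2 := by
    rw [invol_cycleType hsq1, hcard1, show N - 1 = n - 2 by omega]
  have hct2 : σ₂.cycleType = Multiset.replicate ((n - 2) / 2) 2 := by
    rw [invol_cycleType hsq2, hcard2, show N - 1 = n - 2 by omega]
  have hct3 : σ₃.cycleType = Multiset.replicate ((n - 2) / 2) 2 := by
    rw [invol_cycleType hsq3, hcard3, show N - 1 = n - 2 by omega]
  have hctw : w.cycleType = Multiset.replicate ((n - 4) / 2) 2 := by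
    rw [invol_cycleType hsqw, hcardw, show N - 3 = n - 4 by omega]
  -- the 4-cycle
  set L : List (Option (ZMod N)) := [some k, none, some (k + 1), some (k + 2)] with hLdef
  have hnodupL : L.Nodup := by simp [hLdef, hkk1, hkk2, hk1k2]
  set c : Perm (Option (ZMod N)) := L.formPerm with hcdef
  have hcyc : c.IsCycle := List.isCycle_formPerm hnodupL (by simp [hLdef])
  have hsuppc : c.support = L.toFinset :=
    List.support_formPerm_of_nodup L hnodupL (by intro x; simp [hLdef])
  have hctc : c.cycleType = {4} := by
    rw [hcyc.cycleType, hsuppc]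
    congr 1
    rw [List.toFinset_card_of_nodup hnodupL]
    simp [hLdef]
  have hcmul : c = Equiv.swap (some k) none *
      (Equiv.swap none (some (k + 1)) * Equiv.swap (some (k + 1)) (some (k + 2))) := by
    simp [hcdef, hLdef, List.formPerm_cons_cons, List.formPerm_singleton]
  have hc_k : c (some k) = none := by
    rw [hcmul]
    simp only [Equiv.Perm.mul_apply]
    simp [Equiv.swap_apply_def, hkk1, hkk2, hk1k2, Ne.symm hkk1, Ne.symm hkk2, Ne.symm hk1k2]
  have hc_none : c (none) = some (k + 1) := by
    rw [hcmul]
    simp only [Equiv.Perm.mul_apply]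
    simp [Equiv.swap_apply_def, hkk1, hkk2, hk1k2, Ne.symm hkk1, Ne.symm hkk2, Ne.symm hk1k2]
  have hc_k1 : c (some (k + 1)) = some (k + 2) := by
    rw [hcmul]
    simp only [Equiv.Perm.mul_apply]
    simp [Equiv.swap_apply_def, hkk1, hkk2, hk1k2, Ne.symm hkk1, Ne.symm hkk2, Ne.symm hk1k2]
  have hc_k2 : c (some (k + 2)) = some k := by
    rw [hcmul]
    simp only [Equiv.Perm.mul_apply]
    simp [Equiv.swap_apply_def, hkk1, hkk2, hk1k2, Ne.symm hkk1, Ne.symm hkk2, Ne.symm hk1k2]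
  have hc_fix : ∀ x : Option (ZMod N), x ∉ L → c x = x := by
    intro x hx
    exact List.formPerm_apply_of_notMem hx
  -- the image of the complement under 1 - j stays in the complement
  have hSmap : ∀ j : ZMod N, j ≠ k → j ≠ k + 1 → j ≠ k + 2 →
      (1 - j ≠ k ∧ 1 - j ≠ k + 1 ∧ 1 - j ≠ k + 2) := by
    intro j hs1 hs2 hs3
    refine ⟨?_, ?_, ?_⟩
    · intro h
      apply hs3
      have : j = 1 - k := by rw [← h]; ring
      rwa [e4] at this
    · intro h
      apply hs2
      have : j = 1 - (k + 1) := by rw [← h]; ring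
      rwa [e5] at this
    · intro h
      apply hs1
      have : j = 1 - (k + 2) := by rw [← h]; ring
      rwa [e6] at this
  -- the key product identity
  have hρ : σ₁ * σ₂ * σ₃ = c * w := by
    refine Equiv.ext fun x => ?_
    simp only [Equiv.Perm.mul_apply]
    rw [hσ₁, hσ₂, hσ₃, hw]
    cases x with
    | none =>
      rw [show gw N k none = none from rfl, hc_none]
      simp only [g3]
      simp [g1, g2, e1, e5]
    | some j =>
      by_cases h1 : j = k
      · subst h1
        rw [show gw N k (some k) = some k by simp [gw], hc_k]
        simp [g1, g2, g3]
      · by_cases h2 : j = k + 1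
        · subst h2
          rw [show gw N k (some (k + 1)) = some (k + 1) by simp [gw], hc_k1]
          simp only [g3, if_neg (Ne.symm hkk1), if_pos rfl]
          simp [g1, g2, e2, e4]
        · by_cases h3 : j = k + 2
          · subst h3
            rw [show gw N k (some (k + 2)) = some (k + 2) by simp [gw], hc_k2]
            simp only [g3, if_neg (Ne.symm hkk2), if_neg (Ne.symm hk1k2)]
            simp [g1, g2, e6]
          · obtain ⟨hm1, hm2, hm3⟩ := hSmap j h1 h2 h3
            rw [show gw N k (some j) = some (1 - j) by simp [gw, h1, h2, h3],
              hc_fix (some (1 - j)) (by simp [hLdef, hm1, hm2, hm3])]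
            simp only [g3, if_neg h1, if_neg h2]
            simp [g1, g2]
  -- disjointness and the cycle type of the product
  have hdisj : Equiv.Perm.Disjoint c w := by
    intro x
    by_cases hx : x ∈ L
    · right
      rw [hw]
      simp only [hLdef, List.mem_cons, List.mem_singleton, List.not_mem_nil, or_false] at hx
      rcases hx with h | h | h | h <;> subst h <;> simp [gw]
    · left
      exact hc_fix x hx
  have hctρ : (σ₁ * σ₂ * σ₃).cycleType = 4 ::ₘ Multiset.replicate ((n - 4) / 2) 2 := by
    rw [hρ, Equiv.Perm.Disjoint.cycleType_mul hdisj, hctc, hctw, ← Multiset.singleton_add]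
  set σ₄ : Perm (Option (ZMod N)) := (σ₁ * σ₂ * σ₃)⁻¹ with hσ₄def
  have hct4 : σ₄.cycleType = 4 ::ₘ Multiset.replicate ((n - 4) / 2) 2 := by
    rw [hσ₄def, Equiv.Perm.cycleType_inv, hctρ]
  have hprod : σ₁ * σ₂ * σ₃ * σ₄ = 1 := by
    rw [hσ₄def]; group
  -- the rotation
  have hπ : ∀ (t : ℕ) (j : ZMod N), ((σ₁ * σ₂) ^ t) (some j) = some (j + t) := by
    intro t
    induction t with
    | zero => intro j; simp
    | succ t ih =>
      intro j
      rw [pow_succ', Equiv.Perm.mul_apply]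
      have h1 : ∀ x : ZMod N, (σ₁ * σ₂) (some x) = some (x + 1) := by
        intro x
        rw [Equiv.Perm.mul_apply, hσ₁, hσ₂]
        simp only [g1, g2, Option.map_some, Option.some.injEq]
        ring
      rw [ih, h1]
      congr 1
      push_cast
      ring
  -- transitivity on the model
  have key : ∀ a b : Option (ZMod N),
      ∃ g ∈ Subgroup.closure ({σ₁, σ₂, σ₃, σ₄} : Set (Perm (Option (ZMod N)))), g a = b := by
    have hm1 : σ₁ ∈ Subgroup.closure ({σ₁, σ₂, σ₃, σ₄} : Set (Perm (Option (ZMod N)))) :=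
      Subgroup.subset_closure (by simp)
    have hm2 : σ₂ ∈ Subgroup.closure ({σ₁, σ₂, σ₃, σ₄} : Set (Perm (Option (ZMod N)))) :=
      Subgroup.subset_closure (by simp)
    have hm3 : σ₃ ∈ Subgroup.closure ({σ₁, σ₂, σ₃, σ₄} : Set (Perm (Option (ZMod N)))) :=
      Subgroup.subset_closure (by simp)
    have hmπ : σ₁ * σ₂ ∈ Subgroup.closure ({σ₁, σ₂, σ₃, σ₄} : Set (Perm (Option (ZMod N)))) :=
      mul_mem hm1 hm2
    intro a b
    match a, b with
    | none, none => exact ⟨1, one_mem _, by simp⟩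
    | none, some b =>
      refine ⟨(σ₁ * σ₂) ^ (b - k).val * σ₃, mul_mem (pow_mem hmπ _) hm3, ?_⟩
      rw [Equiv.Perm.mul_apply, hσ₃, show g3 N k none = some k from rfl, hπ]
      rw [ZMod.natCast_rightInverse (b - k)]
      congr 1
      ring
    | some a, none =>
      refine ⟨σ₃ * (σ₁ * σ₂) ^ (k - a).val, mul_mem hm3 (pow_mem hmπ _), ?_⟩
      rw [Equiv.Perm.mul_apply, hπ, ZMod.natCast_rightInverse (k - a),
        show a + (k - a) = k by ring, hσ₃]
      simp [g3]
    | some a, some b =>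
      refine ⟨(σ₁ * σ₂) ^ (b - a).val, pow_mem hmπ _, ?_⟩
      rw [hπ, ZMod.natCast_rightInverse (b - a)]
      congr 1
      ring
  -- transport to Fin n
  have hcardfin : Fintype.card (Option (ZMod N)) = n := by rw [hcardO]; omega
  let e : Option (ZMod N) ≃ Fin n := Fintype.equivFinOfCardEq hcardfin
  let fsub : Option (ZMod N) ≃ {x : Fin n // (fun _ : Fin n => True) x} :=
    e.trans (Equiv.subtypeUnivEquiv fun x => trivial).symm
  refine ⟨σ₁.extendDomain fsub, σ₂.extendDomain fsub, σ₃.extendDomain fsub,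
    σ₄.extendDomain fsub, ?_, ?_, ?_, ?_, ?_, ?_⟩
  · rw [Equiv.Perm.cycleType_extendDomain]; exact hct1
  · rw [Equiv.Perm.cycleType_extendDomain]; exact hct2
  · rw [Equiv.Perm.cycleType_extendDomain]; exact hct3
  · rw [Equiv.Perm.cycleType_extendDomain]; exact hct4
  · rw [Equiv.Perm.extendDomain_mul, Equiv.Perm.extendDomain_mul,
      Equiv.Perm.extendDomain_mul, hprod, Equiv.Perm.extendDomain_one]
  · intro a b
    obtain ⟨g, hgH, hgab⟩ := key (fsub.symm ⟨a, trivial⟩) (fsub.symm ⟨b, trivial⟩)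
    refine ⟨g.extendDomain fsub, ?_, ?_⟩
    · have h2 : g.extendDomain fsub ∈
          (Subgroup.closure ({σ₁, σ₂, σ₃, σ₄} : Set (Perm (Option (ZMod N))))).map
            (Equiv.Perm.extendDomainHom fsub) := ⟨g, hgH, rfl⟩
      rw [MonoidHom.map_closure] at h2
      have himg : (⇑(Equiv.Perm.extendDomainHom fsub)) ''
          ({σ₁, σ₂, σ₃, σ₄} : Set (Perm (Option (ZMod N)))) =
          ({σ₁.extendDomain fsub, σ₂.extendDomain fsub, σ₃.extendDomain fsub,
            σ₄.extendDomain fsub} : Set (Perm (Fin n))) := by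
        simp only [Set.image_insert_eq, Set.image_singleton]
        rfl
      rwa [himg] at h2
    · rw [Equiv.Perm.extendDomain_apply_subtype g fsub trivial, hgab,
        Equiv.apply_symm_apply]
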